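/- Let L ∈ ℝ^{m×m} be symmetric positive definite and q_u ∈ ℝᵐ, and set Q_uu = q_u q_uᵀ + L (the Gauss–Newton curvature with regularization Hessian L). Then Q_uu is positive definite, and the scalar c := 1 − q_uᵀ Q_uu⁻¹ q_u satisfies c = 1/(1 + q_uᵀ L⁻¹ q_u), so 0 < c ≤ 1. Consequently, for any q_x ∈ ℝⁿ, the matrix c · q_x q_xᵀ is positive semidefinite of rank at most one and equals z_x z_xᵀ with z_x = √c · q_x; hence the DDP value-Hessian update V_{xx}^t = (1 − q_uᵀ Q_uu⁻¹ q_u) q_x q_xᵀ is itself an outer product of a vector. -/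

import Mathlib

open Matrix

lemma vecMulVec_mulVec' {k l : ℕ} (w : Fin k → ℝ) (v : Fin l → ℝ) (x : Fin l → ℝ) :
    (vecMulVec w v) *ᵥ x = (v ⬝ᵥ x) • w := by
  funext i
  simp only [vecMulVec, mulVec, dotProduct, of_apply, Pi.smul_apply, smul_eq_mul,
    Finset.sum_mul, Finset.mul_sum]
  exact Finset.sum_congr rfl fun j _ => by ring

lemma psd_vecMulVec {k : ℕ} (v : Fin k → ℝ) : (vecMulVec v v).PosSemidef := by
  refine .of_dotProduct_mulVec_nonneg ?_ ?_
  · ext i j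
    simp [vecMulVec, IsHermitian, conjTranspose, mul_comm]
  · intro x
    rw [vecMulVec_mulVec', dotProduct_smul]
    simp only [star_trivial, smul_eq_mul]
    rw [dotProduct_comm]
    exact mul_self_nonneg _

/-- With Q_uu = q_u q_uᵀ + L and L symmetric positive definite, Q_uu is
positive definite, c = 1 − q_uᵀQ_uu⁻¹q_u = 1/(1 + q_uᵀL⁻¹q_u) ∈ (0,1], and
c·q_x q_xᵀ is PSD of rank ≤ 1 and equals z_x z_xᵀ with z_x = √c · q_x. -/
theorem ddp_outer_product_scalar {m n : ℕ}
    (L : Matrix (Fin m) (Fin m) ℝ) (hL : L.PosDef)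
    (qu : Fin m → ℝ) (qx : Fin n → ℝ) :
    let Quu := vecMulVec qu qu + L
    let c := 1 - qu ⬝ᵥ (Quu⁻¹ *ᵥ qu)
    let zx := Real.sqrt c • qx
    Quu.PosDef ∧ c = 1 / (1 + qu ⬝ᵥ (L⁻¹ *ᵥ qu)) ∧ 0 < c ∧ c ≤ 1
      ∧ (c • vecMulVec qx qx).PosSemidef ∧ (c • vecMulVec qx qx).rank ≤ 1
      ∧ c • vecMulVec qx qx = vecMulVec zx zx := by
  intro Quu c zx
  have hQ : Quu.PosDef := Matrix.PosDef.posSemidef_add (psd_vecMulVec qu) hL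
  set s := qu ⬝ᵥ (L⁻¹ *ᵥ qu) with hs_def
  have hs : 0 ≤ s := by
    have := hL.inv.posSemidef.dotProduct_mulVec_nonneg qu
    simpa using this
  have h1s : (0:ℝ) < 1 + s := by linarith
  -- Sherman–Morrison: compute Quu⁻¹ *ᵥ qu
  have hLmul : L *ᵥ (L⁻¹ *ᵥ qu) = qu := by
    rw [mulVec_mulVec, Matrix.mul_nonsing_inv _ hL.det_pos.ne'.isUnit, one_mulVec]
  have hkey : Quu *ᵥ ((1/(1+s)) • (L⁻¹ *ᵥ qu)) = qu := by
    rw [mulVec_smul, add_mulVec, vecMulVec_mulVec', hLmul, ← hs_def]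
    funext i
    simp only [Pi.smul_apply, Pi.add_apply, smul_eq_mul]
    field_simp
    ring
  have hinv : Quu⁻¹ *ᵥ qu = (1/(1+s)) • (L⁻¹ *ᵥ qu) := by
    conv_lhs => rw [← hkey]
    rw [mulVec_mulVec, Matrix.nonsing_inv_mul _ hQ.det_pos.ne'.isUnit, one_mulVec]
  have hc : c = 1 / (1 + s) := by
    show 1 - qu ⬝ᵥ (Quu⁻¹ *ᵥ qu) = 1 / (1 + s)
    rw [hinv, dotProduct_smul, ← hs_def, smul_eq_mul]
    field_simp
    ring
  have hcpos : 0 < c := hc ▸ by positivity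
  have hcle : c ≤ 1 := by
    rw [hc]
    rw [div_le_one h1s]
    linarith
  have heq : c • vecMulVec qx qx = vecMulVec zx zx := by
    ext i j
    show c * (qx i * qx j) = (Real.sqrt c * qx i) * (Real.sqrt c * qx j)
    rw [show (Real.sqrt c * qx i) * (Real.sqrt c * qx j)
        = (Real.sqrt c * Real.sqrt c) * (qx i * qx j) by ring,
      Real.mul_self_sqrt hcpos.le]
  refine ⟨hQ, hc, hcpos, hcle, ?_, ?_, heq⟩
  · rw [heq]; exact psd_vecMulVec zx
  · rw [heq, vecMulVec_eq (Fin 1)]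
    calc (replicateCol (Fin 1) zx * replicateRow (Fin 1) zx).rank ≤ (replicateCol (Fin 1) zx).rank :=
          rank_mul_le_left _ _
      _ ≤ Fintype.card (Fin 1) := rank_le_card_width _
      _ = 1 := Fintype.card_fin 1
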